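/- arXiv:math/0403410 — 7 statements merged into one kernel-verified Lean document; each statement's English description precedes it below -/
import Mathlib

section
/- The linear map ρ¹ : h₁ → gl(3,K) defined on the basis by ρ¹(X) = e₃₂, ρ¹(Y) = 0, ρ¹(Z) = 0 is a 1-cocycle for the standard inclusion ρ of h₁ into gl(3,K); that is, for all A, B in h₁, ρ¹([A,B]) - [ρ(A), ρ¹(B)] + [ρ(B), ρ¹(A)] = 0. -/
open Matrix

variable (K : Type*) [Field K]

/-- `gl(3,K)`, the Lie algebra of all 3×3 matrices with the commutator bracket. -/
abbrev gl3 (K : Type*) [Field K] := Matrix (Fin 3) (Fin 3) K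

/-- The elementary matrix `e_{ij}` (indices 0-based). -/
def E (i j : Fin 3) : gl3 K := Matrix.single i j 1

/-- The set of strictly lower triangular 3×3 matrices: the Heisenberg algebra `h₁`. -/
def lowerTri : Set (gl3 K) := {A | ∀ i j : Fin 3, i ≤ j → A i j = 0}

/-- The cocycle `ρ¹`: `X ↦ e₃₂`, `Y, Z ↦ 0` (read off via the `X`-coordinate `A 1 0`). -/
def rho1 (A : gl3 K) : gl3 K := A 1 0 • E K 2 1

/-- The cocycle `ρ²`: `Z ↦ e₂₁`, `X, Y ↦ 0`. -/
def rho2 (A : gl3 K) : gl3 K := A 2 1 • E K 1 0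

/-- The cocycle `ρ³`: `Y ↦ e₂₁`, `Z ↦ 2e₂₂ + e₁₁`, `X ↦ 0`. -/
def rho3 (A : gl3 K) : gl3 K := A 2 0 • E K 1 0 + A 2 1 • ((2 : K) • E K 1 1 + E K 0 0)

/-- The cocycle `ρ⁴`: `X ↦ I`, `Y, Z ↦ 0`. -/
def rho4 (A : gl3 K) : gl3 K := A 1 0 • (1 : gl3 K)

/-- The map `rho1` is a 1-cocycle for the standard inclusion of `h₁` in `gl(3,K)`:
`m([A,B]) - [A, m(B)] + [B, m(A)] = 0` for all `A, B ∈ h₁`. -/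
theorem rho1_is_cocycle :
    ∀ A ∈ lowerTri K, ∀ B ∈ lowerTri K,
      rho1 K (A * B - B * A)
        - (A * rho1 K B - rho1 K B * A)
        + (B * rho1 K A - rho1 K A * B) = 0 := by
  intro A hA B hB
  have a00 := hA 0 0 (le_refl _); have a01 := hA 0 1 (by decide); have a02 := hA 0 2 (by decide)
  have a11 := hA 1 1 (le_refl _); have a12 := hA 1 2 (by decide); have a22 := hA 2 2 (le_refl _)
  have b00 := hB 0 0 (le_refl _); have b01 := hB 0 1 (by decide); have b02 := hB 0 2 (by decide)
  have b11 := hB 1 1 (le_refl _); have b12 := hB 1 2 (by decide); have b22 := hB 2 2 (le_refl _)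
  ext i j
  fin_cases i <;> fin_cases j <;>
    simp [rho1, E, Matrix.mul_apply, Fin.sum_univ_three, Matrix.single,
      a00, a01, a02, a11, a12, a22, b00, b01, b02, b11, b12, b22] <;> ring
end

section
/- The linear map ρ³ : h₁ → gl(3,K) defined by ρ³(X) = 0, ρ³(Y) = e₂₁, ρ³(Z) = 2e₂₂ + e₁₁ is a 1-cocycle for the standard inclusion of h₁ into gl(3,K). -/
open Matrix

variable (K : Type*) [Field K]

set_option maxHeartbeats 2000000 in
/-- The map `rho3` is a 1-cocycle for the standard inclusion of `h₁` in `gl(3,K)`: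
`m([A,B]) - [A, m(B)] + [B, m(A)] = 0` for all `A, B ∈ h₁`. -/
theorem rho3_is_cocycle :
    ∀ A ∈ lowerTri K, ∀ B ∈ lowerTri K,
      rho3 K (A * B - B * A)
        - (A * rho3 K B - rho3 K B * A)
        + (B * rho3 K A - rho3 K A * B) = 0 := by

  intro A hA B hB
  have hA10 := hA 1 0; have hA20 := hA 2 0; have hA21 := hA 2 1
  have hB10 := hB 1 0; have hB20 := hB 2 0; have hB21 := hB 2 1
  have e : ∀ (M : gl3 K), M ∈ lowerTri K → M 0 0 = 0 ∧ M 0 1 = 0 ∧ M 0 2 = 0 ∧ M 1 1 = 0 ∧ M 1 2 = 0 ∧ M 2 2 = 0 := by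
    intro M hM
    exact ⟨hM 0 0 le_rfl, hM 0 1 (by decide), hM 0 2 (by decide), hM 1 1 le_rfl, hM 1 2 (by decide), hM 2 2 le_rfl⟩
  obtain ⟨a00, a01, a02, a11, a12, a22⟩ := e A hA
  obtain ⟨b00, b01, b02, b11, b12, b22⟩ := e B hB
  ext i j
  simp only [rho3, E, Matrix.sub_apply, Matrix.add_apply, Matrix.smul_apply,
    Matrix.mul_apply, Fin.sum_univ_three, Matrix.zero_apply, smul_eq_mul,
    Matrix.single, Matrix.of_apply]
  fin_cases i <;> fin_cases j <;>
    simp_all <;> ring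
end

section
/- None of the four cocycles ρ¹, ρ², ρ³, ρ⁴ is a coboundary; i.e., for each i ∈ {1,2,3,4} there is no matrix M ∈ gl(3,K) such that ρⁱ(A) = [M, A] for all A ∈ h₁. -/
open Matrix

variable (K : Type*) [Field K]

set_option maxHeartbeats 1000000 in
set_option synthInstance.maxHeartbeats 200000 in
/-- None of the four cocycles `ρ¹, ρ², ρ³, ρ⁴` is a coboundary: there is no matrix `M`
with `ρⁱ(A) = [M, A]` for all `A ∈ h₁`. -/
theorem cocycles_not_coboundaries :
    (¬ ∃ M : gl3 K, ∀ A ∈ lowerTri K, rho1 K A = M * A - A * M) ∧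
    (¬ ∃ M : gl3 K, ∀ A ∈ lowerTri K, rho2 K A = M * A - A * M) ∧
    (¬ ∃ M : gl3 K, ∀ A ∈ lowerTri K, rho3 K A = M * A - A * M) ∧
    (¬ ∃ M : gl3 K, ∀ A ∈ lowerTri K, rho4 K A = M * A - A * M) := by
  have hX : (E K 1 0) ∈ lowerTri K := by
    intro i j hij
    fin_cases i <;> fin_cases j <;>
      simp_all [E, Matrix.single]
  have hZ : (E K 2 1) ∈ lowerTri K := by
    intro i j hij
    fin_cases i <;> fin_cases j <;>
      simp_all [E, Matrix.single]
  refine ⟨?_, ?_, ?_, ?_⟩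
  · rintro ⟨M, h⟩
    have := congrFun (congrFun (h (E K 1 0) hX) 2) 1
    simp [rho1, E, Matrix.mul_apply, Matrix.single, Fin.sum_univ_three, Matrix.sub_apply, Matrix.add_apply, Matrix.smul_apply, Matrix.of_apply] at this
  · rintro ⟨M, h⟩
    have := congrFun (congrFun (h (E K 2 1) hZ) 1) 0
    simp [rho2, E, Matrix.mul_apply, Matrix.single, Fin.sum_univ_three, Matrix.sub_apply, Matrix.add_apply, Matrix.smul_apply, Matrix.of_apply] at this
  · rintro ⟨M, h⟩
    have := congrFun (congrFun (h (E K 2 1) hZ) 0) 0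
    simp [rho3, E, Matrix.mul_apply, Matrix.single, Fin.sum_univ_three, Matrix.sub_apply, Matrix.add_apply, Matrix.smul_apply, Matrix.of_apply] at this
  · rintro ⟨M, h⟩
    have := congrFun (congrFun (h (E K 1 0) hX) 2) 2
    simp [rho4, E, Matrix.mul_apply, Matrix.single, Fin.sum_univ_three, Matrix.sub_apply, Matrix.add_apply, Matrix.smul_apply, Matrix.of_apply,
      Matrix.one_apply] at this
end

section
/- The classes of ρ¹, ρ², ρ³, ρ⁴ are linearly independent modulo coboundaries: if a linear combination c₁ρ¹ + c₂ρ² + c₃ρ³ + c₄ρ⁴ equals the coboundary A ↦ [M,A] for some M ∈ gl(3,K), then c₁ = c₂ = c₃ = c₄ = 0. -/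
open Matrix

variable (K : Type*) [Field K]

lemma Emem (i j : Fin 3) (h : j < i) : E K i j ∈ lowerTri K := by
  intro a b hab
  simp only [E, Matrix.single, Matrix.of_apply]
  split
  · next hc => obtain ⟨rfl, rfl⟩ := hc; exact absurd hab (not_le.mpr h)
  · rfl

/-- The classes of `ρ¹, ρ², ρ³, ρ⁴` are linearly independent modulo coboundaries. -/
theorem cocycles_independent_mod_coboundaries :
    ∀ (c1 c2 c3 c4 : K) (M : gl3 K),
      (∀ A ∈ lowerTri K,
        c1 • rho1 K A + c2 • rho2 K A + c3 • rho3 K A + c4 • rho4 K A = M * A - A * M) →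
      c1 = 0 ∧ c2 = 0 ∧ c3 = 0 ∧ c4 = 0 := by
  intro c1 c2 c3 c4 M h
  have h1 := h (E K 1 0) (Emem K 1 0 (by decide))
  have h2 := h (E K 2 1) (Emem K 2 1 (by decide))
  have e1 := congrFun (congrFun h1 2) 1
  have e4 := congrFun (congrFun h1 2) 2
  have e2 := congrFun (congrFun h2 1) 0
  have e3 := congrFun (congrFun h2 0) 0
  simp [rho1, rho2, rho3, rho4, E, Matrix.mul_apply, Fin.sum_univ_three,
    Matrix.one_apply, Matrix.add_apply, Matrix.sub_apply, Matrix.smul_apply,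
    Matrix.single_apply_same, Matrix.single_apply_of_ne] at e1 e2 e3 e4
  exact ⟨e1, e2, e3, e4⟩
end

section
/- The first cohomology space H¹(h₁, gl(3,K)) = Z¹/B¹ has dimension 4 over K. -/
open Matrix

variable (K : Type*) [Field K]

/-- `h₁` as a submodule of `gl(3,K)`. -/
def h1 : Submodule K (gl3 K) where
  carrier := lowerTri K
  add_mem' := by
    intro a b ha hb i j hij
    simp only [Matrix.add_apply, ha i j hij, hb i j hij, add_zero]
  zero_mem' := by intro i j _; rfl
  smul_mem' := by
    intro c a ha i j hij
    simp only [Matrix.smul_apply, ha i j hij, smul_zero]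

lemma comm_mem {K : Type*} [Field K] {A B : gl3 K} (hA : A ∈ h1 K) (hB : B ∈ h1 K) :
    A * B - B * A ∈ h1 K := by
  have hA' : ∀ i j : Fin 3, i ≤ j → A i j = 0 := hA
  have hB' : ∀ i j : Fin 3, i ≤ j → B i j = 0 := hB
  intro i j hij
  have h1 : (A * B) i j = 0 := by
    rw [Matrix.mul_apply]
    exact Finset.sum_eq_zero fun k _ => by
      rcases le_or_gt i k with h | h
      · rw [hA' i k h, zero_mul]
      · rw [hB' k j (h.le.trans hij), mul_zero]
  have h2 : (B * A) i j = 0 := by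
    rw [Matrix.mul_apply]
    exact Finset.sum_eq_zero fun k _ => by
      rcases le_or_gt i k with h | h
      · rw [hB' i k h, zero_mul]
      · rw [hA' k j (h.le.trans hij), mul_zero]
  simp [Matrix.sub_apply, h1, h2]

/-- The space `Z¹(h₁, gl(3,K))` of 1-cocycles: linear maps `m : h₁ → gl(3,K)` with
`m([A,B]) = [A, m(B)] - [B, m(A)]`. -/
def Z1 : Submodule K ((h1 K) →ₗ[K] gl3 K) where
  carrier := {m | ∀ A B : h1 K,
    m ⟨(A : gl3 K) * B - (B : gl3 K) * A, comm_mem A.2 B.2⟩ =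
      ((A : gl3 K) * m B - m B * A) - ((B : gl3 K) * m A - m A * B)}
  add_mem' := by
    intro m n hm hn A B
    simp only [LinearMap.add_apply, hm A B, hn A B]
    noncomm_ring
  zero_mem' := by intro A B; simp
  smul_mem' := by
    intro c m hm A B
    simp only [LinearMap.smul_apply, hm A B, smul_sub, Matrix.mul_smul, Matrix.smul_mul]

/-- The adjoint-action map `gl(3,K) → Hom(h₁, gl(3,K))`, `M ↦ (A ↦ [M,A])`;
its range is the space `B¹` of coboundaries. -/
def adMap : gl3 K →ₗ[K] ((h1 K) →ₗ[K] gl3 K) where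
  toFun M :=
    { toFun := fun A => M * (A : gl3 K) - (A : gl3 K) * M
      map_add' := by
        intro A B
        simp only [Submodule.coe_add]
        noncomm_ring
      map_smul' := by
        intro c A
        simp [Matrix.mul_smul, Matrix.smul_mul, smul_sub] }
  map_add' := by
    intro M N
    ext A
    simp only [LinearMap.coe_mk, AddHom.coe_mk, LinearMap.add_apply]
    noncomm_ring
    simp only [Matrix.add_apply, Matrix.smul_apply, smul_eq_mul, neg_mul, one_mul]
    ring
  map_smul' := by
    intro c M
    ext A
    simp [Matrix.mul_smul, Matrix.smul_mul, smul_sub]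
    ring



def Xe : h1 K := ⟨E K 1 0, by intro i j hij; fin_cases i <;> fin_cases j <;> simp_all [E, Matrix.single]⟩
def Ye : h1 K := ⟨E K 2 0, by intro i j hij; fin_cases i <;> fin_cases j <;> simp_all [E, Matrix.single]⟩
def Ze : h1 K := ⟨E K 2 1, by intro i j hij; fin_cases i <;> fin_cases j <;> simp_all [E, Matrix.single]⟩

lemma h1_decomp (A : h1 K) :
    A = (A : gl3 K) 1 0 • Xe K + (A : gl3 K) 2 0 • Ye K + (A : gl3 K) 2 1 • Ze K := by
  have hA : ∀ i j : Fin 3, i ≤ j → (A : gl3 K) i j = 0 := A.2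
  apply Subtype.ext
  show (A : gl3 K) = _
  push_cast [Xe, Ye, Ze]
  ext i j
  fin_cases i <;> fin_cases j <;>
    simp [E, Matrix.single] <;> exact hA _ _ (by decide)

def r1 : (h1 K) →ₗ[K] gl3 K where
  toFun A := rho1 K A
  map_add' A B := by ext i j; simp [rho1, Matrix.add_apply, Matrix.smul_apply, smul_eq_mul]; all_goals ring
  map_smul' c A := by ext i j; simp [rho1, Matrix.smul_apply, smul_eq_mul]; all_goals ring

def r2 : (h1 K) →ₗ[K] gl3 K where
  toFun A := rho2 K A
  map_add' A B := by ext i j; simp [rho2, Matrix.add_apply, Matrix.smul_apply, smul_eq_mul]; all_goals ring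
  map_smul' c A := by ext i j; simp [rho2, Matrix.smul_apply, smul_eq_mul]; all_goals ring

def r3 : (h1 K) →ₗ[K] gl3 K where
  toFun A := rho3 K A
  map_add' A B := by ext i j; simp [rho3, Matrix.add_apply, Matrix.smul_apply, smul_eq_mul]; all_goals ring
  map_smul' c A := by ext i j; simp [rho3, Matrix.smul_apply, smul_eq_mul]; all_goals ring

def r4 : (h1 K) →ₗ[K] gl3 K where
  toFun A := rho4 K A
  map_add' A B := by ext i j; simp [rho4, Matrix.add_apply, Matrix.smul_apply, smul_eq_mul]; all_goals ring
  map_smul' c A := by ext i j; simp [rho4, Matrix.smul_apply, smul_eq_mul]; all_goals ring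

lemma lower_entries {A : gl3 K} (hA : A ∈ h1 K) :
    A 0 0 = 0 ∧ A 0 1 = 0 ∧ A 0 2 = 0 ∧ A 1 1 = 0 ∧ A 1 2 = 0 ∧ A 2 2 = 0 := by
  have h : ∀ i j : Fin 3, i ≤ j → A i j = 0 := hA
  exact ⟨h 0 0 (by decide), h 0 1 (by decide), h 0 2 (by decide),
    h 1 1 (by decide), h 1 2 (by decide), h 2 2 (by decide)⟩

lemma r1_mem : r1 K ∈ Z1 K := by
  intro A B
  obtain ⟨a1, a2, a3, a4, a5, a6⟩ := lower_entries K A.2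
  obtain ⟨b1, b2, b3, b4, b5, b6⟩ := lower_entries K B.2
  ext i j
  fin_cases i <;> fin_cases j <;>
    simp [r1, rho1, E, Matrix.mul_apply, Fin.sum_univ_three, Matrix.single,
      a1, a2, a3, a4, a5, a6, b1, b2, b3, b4, b5, b6] <;> ring

lemma r2_mem : r2 K ∈ Z1 K := by
  intro A B
  obtain ⟨a1, a2, a3, a4, a5, a6⟩ := lower_entries K A.2
  obtain ⟨b1, b2, b3, b4, b5, b6⟩ := lower_entries K B.2
  ext i j
  fin_cases i <;> fin_cases j <;>
    simp [r2, rho2, E, Matrix.mul_apply, Fin.sum_univ_three, Matrix.single,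
      a1, a2, a3, a4, a5, a6, b1, b2, b3, b4, b5, b6] <;> ring

lemma r3_mem : r3 K ∈ Z1 K := by
  intro A B
  obtain ⟨a1, a2, a3, a4, a5, a6⟩ := lower_entries K A.2
  obtain ⟨b1, b2, b3, b4, b5, b6⟩ := lower_entries K B.2
  ext i j
  fin_cases i <;> fin_cases j <;>
    simp [r3, rho3, E, Matrix.mul_apply, Fin.sum_univ_three, Matrix.single,
      a1, a2, a3, a4, a5, a6, b1, b2, b3, b4, b5, b6] <;> ring

lemma r4_mem : r4 K ∈ Z1 K := by
  intro A B
  obtain ⟨a1, a2, a3, a4, a5, a6⟩ := lower_entries K A.2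
  obtain ⟨b1, b2, b3, b4, b5, b6⟩ := lower_entries K B.2
  ext i j
  fin_cases i <;> fin_cases j <;>
    simp [r4, rho4, E, Matrix.mul_apply, Fin.sum_univ_three, Matrix.single,
      Matrix.one_apply, a1, a2, a3, a4, a5, a6, b1, b2, b3, b4, b5, b6] <;> ring

def phi : (Z1 K) →ₗ[K] (Fin 4 → K) where
  toFun m := ![(m.1 (Xe K)) 2 1, (m.1 (Xe K)) 2 2, (m.1 (Ze K)) 0 0, (m.1 (Ze K)) 1 0]
  map_add' m n := by ext i; fin_cases i <;> simp
  map_smul' c m := by ext i; fin_cases i <;> simp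

set_option synthInstance.maxHeartbeats 1000000 in
lemma phi_surj : Function.Surjective (phi K) := by
  intro v
  refine ⟨v 0 • ⟨r1 K, r1_mem K⟩ + v 3 • ⟨r2 K, r2_mem K⟩ +
    v 2 • ⟨r3 K, r3_mem K⟩ + v 1 • ⟨r4 K, r4_mem K⟩, ?_⟩
  funext i
  fin_cases i <;>
    simp [phi, r1, r2, r3, r4, rho1, rho2, rho3, rho4, Xe, Ze, E,
      Submodule.coe_add, SetLike.val_smul, Matrix.single, Matrix.one_apply,
      Matrix.of_apply, Matrix.vecHead, Matrix.vecTail]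

set_option maxHeartbeats 2000000 in
set_option synthInstance.maxHeartbeats 1000000 in
lemma phi_ker [CharZero K] : LinearMap.ker (phi K) =
    Submodule.comap (Z1 K).subtype (LinearMap.range (adMap K)) := by
  ext m
  simp only [LinearMap.mem_ker, Submodule.mem_comap, LinearMap.mem_range, Submodule.coe_subtype]
  constructor
  · intro h0
    obtain ⟨a, ha⟩ : ∃ x, x = m.1 (Xe K) := ⟨_, rfl⟩
    obtain ⟨b, hb⟩ : ∃ x, x = m.1 (Ye K) := ⟨_, rfl⟩
    obtain ⟨c, hc⟩ : ∃ x, x = m.1 (Ze K) := ⟨_, rfl⟩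
    have h7 : a 2 1 = 0 := by simpa [phi, ← ha] using congrFun h0 0
    have h8 : a 2 2 = 0 := by simpa [phi, ← ha] using congrFun h0 1
    have h18 : c 0 0 = 0 := by simpa [phi, ← hc] using congrFun h0 2
    have h21 : c 1 0 = 0 := by simpa [phi, ← hc] using congrFun h0 3
    have hXY := m.2 (Xe K) (Ye K)
    have hXZ := m.2 (Xe K) (Ze K)
    have hYZ := m.2 (Ye K) (Ze K)
    rw [show (⟨((Xe K : gl3 K)) * ((Ye K : gl3 K)) - ((Ye K : gl3 K)) * ((Xe K : gl3 K)),
        comm_mem (Xe K).2 (Ye K).2⟩ : h1 K) = 0 from Subtype.ext (by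
      ext i j; fin_cases i <;> fin_cases j <;>
        simp [Xe, Ye, E, Matrix.mul_apply, Fin.sum_univ_three, Matrix.single]),
      map_zero] at hXY
    rw [show (⟨((Xe K : gl3 K)) * ((Ze K : gl3 K)) - ((Ze K : gl3 K)) * ((Xe K : gl3 K)),
        comm_mem (Xe K).2 (Ze K).2⟩ : h1 K) = -(Ye K) from Subtype.ext (by
      ext i j; fin_cases i <;> fin_cases j <;>
        simp [Xe, Ye, Ze, E, Matrix.mul_apply, Fin.sum_univ_three, Matrix.single]),
      map_neg] at hXZ
    rw [show (⟨((Ye K : gl3 K)) * ((Ze K : gl3 K)) - ((Ze K : gl3 K)) * ((Ye K : gl3 K)),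
        comm_mem (Ye K).2 (Ze K).2⟩ : h1 K) = 0 from Subtype.ext (by
      ext i j; fin_cases i <;> fin_cases j <;>
        simp [Ye, Ze, E, Matrix.mul_apply, Fin.sum_univ_three, Matrix.single]),
      map_zero] at hYZ
    simp only [← ha, ← hb, ← hc] at hXY hXZ hYZ
    refine ⟨!![0, a 0 0, -(a 1 2); -(c 2 0), a 1 0, b 1 0; 0, a 2 0, b 2 0], ?_⟩
    apply LinearMap.ext
    intro A
    have key : ∀ B : h1 K, adMap K (!![0, a 0 0, -(a 1 2); -(c 2 0), a 1 0, b 1 0; 0, a 2 0, b 2 0] : gl3 K) B = m.1 B := by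
      have gX : adMap K (!![0, a 0 0, -(a 1 2); -(c 2 0), a 1 0, b 1 0; 0, a 2 0, b 2 0] : gl3 K) (Xe K) = a := by
        ext i j
        fin_cases i <;> fin_cases j
        · simp [adMap, Xe, Ye, Ze, E, Matrix.mul_apply, Fin.sum_univ_three, Matrix.single, Matrix.of_apply, Matrix.vecHead, Matrix.vecTail]
          all_goals ring
        · linear_combination (norm := (simp [adMap, Xe, Ye, Ze, E, Matrix.mul_apply, Fin.sum_univ_three, Matrix.single, Matrix.of_apply, Matrix.vecHead, Matrix.vecTail]; try ring1)) (-1 : K) * (congrFun (congrFun hXY 2) 1)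
        · linear_combination (norm := (simp [adMap, Xe, Ye, Ze, E, Matrix.mul_apply, Fin.sum_univ_three, Matrix.single, Matrix.of_apply, Matrix.vecHead, Matrix.vecTail]; try ring1)) (1 : K) * (congrFun (congrFun hXY 0) 0) + (1 : K) * (congrFun (congrFun hXY 1) 1)
        · simp [adMap, Xe, Ye, Ze, E, Matrix.mul_apply, Fin.sum_univ_three, Matrix.single, Matrix.of_apply, Matrix.vecHead, Matrix.vecTail]
          all_goals ring
        · linear_combination (norm := (simp [adMap, Xe, Ye, Ze, E, Matrix.mul_apply, Fin.sum_univ_three, Matrix.single, Matrix.of_apply, Matrix.vecHead, Matrix.vecTail]; try ring1)) (-1 : K) * (congrFun (congrFun hXY 2) 0) + (-1 : K) * (congrFun (congrFun hXZ 2) 1) + (-2 : K) * h8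
        · simp [adMap, Xe, Ye, Ze, E, Matrix.mul_apply, Fin.sum_univ_three, Matrix.single, Matrix.of_apply, Matrix.vecHead, Matrix.vecTail]
          all_goals ring
        · simp [adMap, Xe, Ye, Ze, E, Matrix.mul_apply, Fin.sum_univ_three, Matrix.single, Matrix.of_apply, Matrix.vecHead, Matrix.vecTail]
          all_goals ring
        · linear_combination (norm := (simp [adMap, Xe, Ye, Ze, E, Matrix.mul_apply, Fin.sum_univ_three, Matrix.single, Matrix.of_apply, Matrix.vecHead, Matrix.vecTail]; try ring1)) (-1 : K) * h7
        · linear_combination (norm := (simp [adMap, Xe, Ye, Ze, E, Matrix.mul_apply, Fin.sum_univ_three, Matrix.single, Matrix.of_apply, Matrix.vecHead, Matrix.vecTail]; try ring1)) (-1 : K) * h8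
      have gY : adMap K (!![0, a 0 0, -(a 1 2); -(c 2 0), a 1 0, b 1 0; 0, a 2 0, b 2 0] : gl3 K) (Ye K) = b := by
        ext i j
        fin_cases i <;> fin_cases j
        · linear_combination (norm := (simp [adMap, Xe, Ye, Ze, E, Matrix.mul_apply, Fin.sum_univ_three, Matrix.single, Matrix.of_apply, Matrix.vecHead, Matrix.vecTail]; try ring1)) ((1 : K)/2) * (congrFun (congrFun hXY 1) 0) + ((1 : K)/2) * (congrFun (congrFun hXZ 0) 0) + ((1 : K)/2) * (congrFun (congrFun hXZ 1) 1)
        · linear_combination (norm := (simp [adMap, Xe, Ye, Ze, E, Matrix.mul_apply, Fin.sum_univ_three, Matrix.single, Matrix.of_apply, Matrix.vecHead, Matrix.vecTail]; try ring1)) (1 : K) * (congrFun (congrFun hXY 1) 1)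
        · linear_combination (norm := (simp [adMap, Xe, Ye, Ze, E, Matrix.mul_apply, Fin.sum_univ_three, Matrix.single, Matrix.of_apply, Matrix.vecHead, Matrix.vecTail]; try ring1)) (1 : K) * (congrFun (congrFun hXY 1) 2)
        · simp [adMap, Xe, Ye, Ze, E, Matrix.mul_apply, Fin.sum_univ_three, Matrix.single, Matrix.of_apply, Matrix.vecHead, Matrix.vecTail]
          all_goals ring
        · linear_combination (norm := (simp [adMap, Xe, Ye, Ze, E, Matrix.mul_apply, Fin.sum_univ_three, Matrix.single, Matrix.of_apply, Matrix.vecHead, Matrix.vecTail]; try ring1)) ((-1 : K)/2) * (congrFun (congrFun hXY 1) 0) + ((1 : K)/2) * (congrFun (congrFun hXZ 0) 0) + ((1 : K)/2) * (congrFun (congrFun hXZ 1) 1)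
        · linear_combination (norm := (simp [adMap, Xe, Ye, Ze, E, Matrix.mul_apply, Fin.sum_univ_three, Matrix.single, Matrix.of_apply, Matrix.vecHead, Matrix.vecTail]; try ring1)) (1 : K) * (congrFun (congrFun hXZ 1) 2) + (1 : K) * (congrFun (congrFun hYZ 0) 0)
        · simp [adMap, Xe, Ye, Ze, E, Matrix.mul_apply, Fin.sum_univ_three, Matrix.single, Matrix.of_apply, Matrix.vecHead, Matrix.vecTail]
          all_goals ring
        · linear_combination (norm := (simp [adMap, Xe, Ye, Ze, E, Matrix.mul_apply, Fin.sum_univ_three, Matrix.single, Matrix.of_apply, Matrix.vecHead, Matrix.vecTail]; try ring1)) (-1 : K) * (congrFun (congrFun hXY 2) 0) + (-1 : K) * h8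
        · linear_combination (norm := (simp [adMap, Xe, Ye, Ze, E, Matrix.mul_apply, Fin.sum_univ_three, Matrix.single, Matrix.of_apply, Matrix.vecHead, Matrix.vecTail]; try ring1)) (1 : K) * (congrFun (congrFun hXZ 2) 2)
      have gZ : adMap K (!![0, a 0 0, -(a 1 2); -(c 2 0), a 1 0, b 1 0; 0, a 2 0, b 2 0] : gl3 K) (Ze K) = c := by
        ext i j
        fin_cases i <;> fin_cases j
        · linear_combination (norm := (simp [adMap, Xe, Ye, Ze, E, Matrix.mul_apply, Fin.sum_univ_three, Matrix.single, Matrix.of_apply, Matrix.vecHead, Matrix.vecTail]; try ring1)) (-1 : K) * h18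
        · linear_combination (norm := (simp [adMap, Xe, Ye, Ze, E, Matrix.mul_apply, Fin.sum_univ_three, Matrix.single, Matrix.of_apply, Matrix.vecHead, Matrix.vecTail]; try ring1)) ((1 : K)/2) * (congrFun (congrFun hXY 1) 0) + ((-1 : K)/2) * (congrFun (congrFun hXZ 0) 0) + ((1 : K)/2) * (congrFun (congrFun hXZ 1) 1)
        · linear_combination (norm := (simp [adMap, Xe, Ye, Ze, E, Matrix.mul_apply, Fin.sum_univ_three, Matrix.single, Matrix.of_apply, Matrix.vecHead, Matrix.vecTail]; try ring1)) (-1 : K) * (congrFun (congrFun hYZ 0) 0)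
        · linear_combination (norm := (simp [adMap, Xe, Ye, Ze, E, Matrix.mul_apply, Fin.sum_univ_three, Matrix.single, Matrix.of_apply, Matrix.vecHead, Matrix.vecTail]; try ring1)) (-1 : K) * h21
        · linear_combination (norm := (simp [adMap, Xe, Ye, Ze, E, Matrix.mul_apply, Fin.sum_univ_three, Matrix.single, Matrix.of_apply, Matrix.vecHead, Matrix.vecTail]; try ring1)) (-1 : K) * (congrFun (congrFun hXZ 1) 0) + (-1 : K) * h18
        · linear_combination (norm := (simp [adMap, Xe, Ye, Ze, E, Matrix.mul_apply, Fin.sum_univ_three, Matrix.single, Matrix.of_apply, Matrix.vecHead, Matrix.vecTail]; try ring1)) (-1 : K) * (congrFun (congrFun hYZ 1) 0)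
        · simp [adMap, Xe, Ye, Ze, E, Matrix.mul_apply, Fin.sum_univ_three, Matrix.single, Matrix.of_apply, Matrix.vecHead, Matrix.vecTail]
          all_goals ring
        · linear_combination (norm := (simp [adMap, Xe, Ye, Ze, E, Matrix.mul_apply, Fin.sum_univ_three, Matrix.single, Matrix.of_apply, Matrix.vecHead, Matrix.vecTail]; try ring1)) (-1 : K) * (congrFun (congrFun hXZ 2) 0)
        · linear_combination (norm := (simp [adMap, Xe, Ye, Ze, E, Matrix.mul_apply, Fin.sum_univ_three, Matrix.single, Matrix.of_apply, Matrix.vecHead, Matrix.vecTail]; try ring1)) (-1 : K) * (congrFun (congrFun hYZ 2) 0) + (-1 : K) * h18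
      intro B
      rw [h1_decomp K B, _root_.map_add, _root_.map_add, _root_.map_smul, _root_.map_smul,
        _root_.map_smul, _root_.map_add, _root_.map_add, _root_.map_smul, _root_.map_smul,
        _root_.map_smul, gX, gY, gZ]
      simp only [← ha, ← hb, ← hc]
    exact key A
  · rintro ⟨M, hM⟩
    ext i
    fin_cases i <;>
      simp [phi, ← hM, adMap, Xe, Ze, E, Matrix.mul_apply, Fin.sum_univ_three,
        Matrix.single]

set_option maxSynthPendingDepth 3 in
set_option synthInstance.maxHeartbeats 1000000 in
/-- `H¹(h₁, gl(3,K)) = Z¹/B¹` has dimension 4, where `B¹` is viewed inside `Z¹` via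
`Submodule.comap (Z1 K).subtype`. -/

theorem finrank_H1 (K : Type*) [Field K] [CharZero K] :
    Module.finrank K
      ((↥(Z1 K)) ⧸ (Submodule.comap (Z1 K).subtype (LinearMap.range (adMap K)))) = 4 := by
  rw [← phi_ker K]
  rw [((phi K).quotKerEquivOfSurjective (phi_surj K)).finrank_eq]
  simp [Module.finrank_fin_fun]
end

section
/- The cup products [[ρⁱ,ρʲ]] vanish identically for all pairs (i,j) with 1 ≤ i ≤ j ≤ 4 except (i,j) ∈ {(1,2),(1,3),(3,3)}; i.e., for such pairs, [ρⁱ(A),ρʲ(B)] + [ρʲ(A),ρⁱ(B)] - [ρⁱ(B),ρʲ(A)] - [ρʲ(B),ρⁱ(A)] = 0 for all A,B ∈ h₁. -/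
open Matrix

variable (K : Type*) [Field K]

/-- The family `ρ¹, ρ², ρ³, ρ⁴` (0-indexed). -/
def rhoF (i : Fin 4) : gl3 K → gl3 K := ![rho1 K, rho2 K, rho3 K, rho4 K] i

set_option maxHeartbeats 1600000

/-- All cup products `[[ρⁱ,ρʲ]]` with `i ≤ j` vanish identically except for the pairs
`(1,2), (1,3), (3,3)` (here 0-indexed as `(0,1), (0,2), (2,2)`). -/
theorem cup_products_vanish :
    ∀ i j : Fin 4, i ≤ j →
      (i, j) ≠ ((0 : Fin 4), (1 : Fin 4)) →
      (i, j) ≠ ((0 : Fin 4), (2 : Fin 4)) →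
      (i, j) ≠ ((2 : Fin 4), (2 : Fin 4)) →
      ∀ A ∈ lowerTri K, ∀ B ∈ lowerTri K,
        (rhoF K i A * rhoF K j B - rhoF K j B * rhoF K i A)
          + (rhoF K j A * rhoF K i B - rhoF K i B * rhoF K j A)
          - (rhoF K i B * rhoF K j A - rhoF K j A * rhoF K i B)
          - (rhoF K j B * rhoF K i A - rhoF K i A * rhoF K j B) = 0 := by
  intro i j hij h1 h2 h3 A _ B _
  fin_cases i <;> fin_cases j <;>
    first
    | exact absurd hij (by decide)
    | exact absurd rfl h1
    | exact absurd rfl h2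
    | exact absurd rfl h3
    | (ext a b
       fin_cases a <;> fin_cases b <;>
         simp [rhoF, rho1, rho2, rho3, rho4, E, Matrix.mul_apply, Matrix.one_apply,
           Fin.sum_univ_succ, Matrix.single] <;> ring)
end

section
/- For all parameter values t₁, t₂, t₃, t₄ ∈ K, the map ρ̃(t) : h₁ → gl(3,K) sending the matrix with entries a = A₂₁, b = A₃₂, c = A₃₁ (and zeros elsewhere) to the matrix with rows [bt₃ + at₁t₃ + at₄, 0, 0; a + bt₂ + at₁t₂ + ct₃, 2bt₃ + 2at₁t₃ + at₄, -bt₃² - at₁t₃²; c, b + at₁, at₄] is a Lie algebra homomorphism: ρ̃(t)([A,B]) = [ρ̃(t)(A), ρ̃(t)(B)] for all A, B ∈ h₁. -/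
open Matrix

variable (K : Type*) [Field K]

/-- The miniversal deformation `ρ̃(t₁,t₂,t₃,t₄)` applied to the strictly lower
triangular matrix with entries `a = A 1 0`, `b = A 2 1`, `c = A 2 0` (0-based). -/
def defo (t1 t2 t3 t4 : K) (A : gl3 K) : gl3 K :=
  !![A 2 1 * t3 + A 1 0 * t1 * t3 + A 1 0 * t4, 0, 0;
     A 1 0 + A 2 1 * t2 + A 1 0 * t1 * t2 + A 2 0 * t3,
       2 * A 2 1 * t3 + 2 * A 1 0 * t1 * t3 + A 1 0 * t4,
       -(A 2 1) * t3 ^ 2 - A 1 0 * t1 * t3 ^ 2;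
     A 2 0, A 2 1 + A 1 0 * t1, A 1 0 * t4]

set_option maxHeartbeats 2000000 in
/-- For all parameters, `ρ̃(t)` is a Lie algebra homomorphism on `h₁`:
`ρ̃(t)([A,B]) = [ρ̃(t)A, ρ̃(t)B]`. -/
theorem defo_is_hom :
    ∀ t1 t2 t3 t4 : K, ∀ A ∈ lowerTri K, ∀ B ∈ lowerTri K,
      defo K t1 t2 t3 t4 (A * B - B * A) =
        defo K t1 t2 t3 t4 A * defo K t1 t2 t3 t4 B
          - defo K t1 t2 t3 t4 B * defo K t1 t2 t3 t4 A := by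
  intro t1 t2 t3 t4 A hA B hB
  have hA00 := hA 0 0 (le_refl _); have hA01 := hA 0 1 (by decide)
  have hA02 := hA 0 2 (by decide); have hA11 := hA 1 1 (le_refl _)
  have hA12 := hA 1 2 (by decide); have hA22 := hA 2 2 (le_refl _)
  have hB00 := hB 0 0 (le_refl _); have hB01 := hB 0 1 (by decide)
  have hB02 := hB 0 2 (by decide); have hB11 := hB 1 1 (le_refl _)
  have hB12 := hB 1 2 (by decide); have hB22 := hB 2 2 (le_refl _)
  have hC10 : (A * B - B * A) 1 0 = 0 := by
    simp [Matrix.mul_apply, Fin.sum_univ_three, hA00, hA11, hA12, hB00, hB11, hB12]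
  have hC21 : (A * B - B * A) 2 1 = 0 := by
    simp [Matrix.mul_apply, Fin.sum_univ_three, hA01, hA11, hA22, hB01, hB11, hB22]
  have hC20 : (A * B - B * A) 2 0 = A 2 1 * B 1 0 - B 2 1 * A 1 0 := by
    simp [Matrix.mul_apply, Fin.sum_univ_three, hA00, hA01, hA22, hB00, hB01, hB22]
  rw [show defo K t1 t2 t3 t4 (A * B - B * A) =
      !![0, 0, 0; (A 2 1 * B 1 0 - B 2 1 * A 1 0) * t3, 0, 0;
         A 2 1 * B 1 0 - B 2 1 * A 1 0, 0, 0] by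
    unfold defo; rw [hC10, hC21, hC20]; norm_num]
  unfold defo
  ext i j
  fin_cases i <;> fin_cases j <;>
    simp [Matrix.mul_apply, Fin.sum_univ_three, Matrix.vecHead, Matrix.vecTail] <;> ring
end
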